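/- Let d ≥ 2, let g1 and g2 be permutations of a set with d elements such that g2 is a transposition and g1 and g2 together generate the full symmetric group on the d elements. Then the number of orbits of the cyclic group generated by g1 is at most 2. Moreover, if this number of orbits equals 2, then the product g1·g2 is a cycle of length d (a single cycle whose support is the whole set), and if it equals 1 (i.e., g1 is a d-cycle), then the cyclic group generated by g2·g1 has exactly 2 orbits. -/

import Mathlib

/-- The number of orbits of the cyclic group generated by the permutation `g`:
    the number of equivalence classes of the relation `y = g^m x` (`m : ℤ`),
    i.e. of the relation `Equiv.Perm.SameCycle g`. -/
noncomputable def orbitCount {α : Type*} (g : Equiv.Perm α) : ℕ :=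
  (Set.range fun x => {y | g.SameCycle x y}).ncard

namespace Stmt16Aux

open Equiv Equiv.Perm

variable {α : Type*}

lemma sameCycle_of_cls_eq {g : Perm α} {a b : α}
    (h : {y | g.SameCycle a y} = {y | g.SameCycle b y}) : g.SameCycle a b := by
  have hb : b ∈ {y | g.SameCycle b y} := SameCycle.refl g b
  rw [← h] at hb
  exact hb

lemma cls_eq_of_sameCycle {g : Perm α} {a b : α} (h : g.SameCycle a b) :
    {y | g.SameCycle a y} = {y | g.SameCycle b y} := by
  ext y
  exact ⟨fun hy => h.symm.trans hy, fun hy => h.trans hy⟩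

/-- The subgroup of permutations preserving a set `S`. -/
def invSubgroup (S : Set α) : Subgroup (Equiv.Perm α) where
  carrier := {g | ∀ x, g x ∈ S ↔ x ∈ S}
  one_mem' := fun _ => Iff.rfl
  mul_mem' := fun {g h} hg hh x => (hg (h x)).trans (hh x)
  inv_mem' := fun {g} hg x => by
    have := hg (g⁻¹ x)
    simpa using this.symm

lemma mem_invSubgroup {S : Set α} {g : Equiv.Perm α} :
    g ∈ invSubgroup S ↔ ∀ x, g x ∈ S ↔ x ∈ S := Iff.rfl

lemma cover [Fintype α] [DecidableEq α] {g1 g2 : Perm α}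
    (hgen : Subgroup.closure {g1, g2} = (⊤ : Subgroup (Equiv.Perm α))) {S : Set α}
    (h1 : ∀ x, g1 x ∈ S ↔ x ∈ S) (h2 : ∀ x, g2 x ∈ S ↔ x ∈ S)
    (hne : S.Nonempty) : S = Set.univ := by
  have hle : Subgroup.closure {g1, g2} ≤ invSubgroup S := by
    rw [Subgroup.closure_le]
    rintro g (rfl | rfl)
    exacts [h1, h2]
  rw [hgen] at hle
  obtain ⟨c, hc⟩ := hne
  refine Set.eq_univ_iff_forall.2 fun y => ?_
  have hy := (mem_invSubgroup.1 (hle (Subgroup.mem_top (Equiv.swap c y)))) c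
  rw [Equiv.swap_apply_left] at hy
  exact hy.2 hc

/-- Key merging lemma: multiplying by a transposition joining two distinct cycles
    connects the two points. -/
lemma sameCycle_mul_swap [Fintype α] [DecidableEq α] {σ : Perm α} {a b : α}
    (hnsc : ¬σ.SameCycle a b) : (σ * Equiv.swap a b).SameCycle a b := by
  set τ := Equiv.swap a b with hτ
  set m := Function.minimalPeriod ⇑σ a with hm
  have hper : Function.IsPeriodicPt ⇑σ (orderOf σ) a := by
    show (⇑σ)^[orderOf σ] a = a
    simp [← Equiv.Perm.coe_pow, pow_orderOf_eq_one]
  have hmpos : 0 < m := hper.minimalPeriod_pos (orderOf_pos σ)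
  have hma : (σ ^ m) a = a := by
    have := Function.iterate_minimalPeriod (f := ⇑σ) (x := a)
    simpa [← hm, Equiv.Perm.coe_pow] using this
  have hne : ∀ k, 0 < k → k < m → (σ ^ k) a ≠ a := by
    intro k hk hkm hk'
    have : Function.IsPeriodicPt ⇑σ k a := by
      show (⇑σ)^[k] a = a
      simpa [Equiv.Perm.coe_pow] using hk'
    exact absurd (this.eq_zero_of_lt_minimalPeriod hkm) (by omega)
  have hneb : ∀ k : ℕ, (σ ^ k) a ≠ b := by
    intro k hk
    exact hnsc ⟨(k : ℤ), by simpa [zpow_natCast] using hk⟩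
  have key : ∀ k, 1 ≤ k → k ≤ m → ((σ * τ) ^ k) b = (σ ^ k) a := by
    intro k
    induction k with
    | zero => omega
    | succ n ih =>
      intro _ hle
      rcases Nat.eq_zero_or_pos n with hn | hn
      · subst hn
        simp [hτ, Equiv.swap_apply_right, Equiv.Perm.mul_apply]
      · have hihn := ih hn (by omega)
        have hnea : (σ ^ n) a ≠ a := hne n hn (by omega)
        calc ((σ * τ) ^ (n + 1)) b = (σ * τ) (((σ * τ) ^ n) b) := by
              rw [pow_succ' (σ * τ) n]; rfl
          _ = σ (τ ((σ ^ n) a)) := by rw [hihn]; rfl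
          _ = σ ((σ ^ n) a) := by
              rw [hτ, Equiv.swap_apply_of_ne_of_ne hnea (hneb n)]
          _ = (σ ^ (n + 1)) a := by rw [pow_succ' σ n]; rfl
  have : ((σ * τ) ^ m) b = a := by rw [key m hmpos le_rfl, hma]
  have hba : (σ * τ).SameCycle b a := ⟨(m : ℤ), by simpa [zpow_natCast] using this⟩
  exact hba.symm

lemma isCycle_of_all [Fintype α] [DecidableEq α] {g : Perm α} (hcard : 2 ≤ Fintype.card α)
    (hall : ∀ x y, g.SameCycle x y) : g.IsCycle ∧ g.support = Finset.univ := by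
  have hfix : ∀ y, g y ≠ y := by
    intro y hy
    obtain ⟨z, hz⟩ := Fintype.exists_ne_of_one_lt_card (by omega) y
    obtain ⟨n, hn⟩ := hall y z
    rw [Equiv.Perm.zpow_apply_eq_self_of_apply_eq_self hy] at hn
    exact hz hn.symm
  have hne : Nonempty α := Fintype.card_pos_iff.1 (by omega)
  obtain ⟨x⟩ := hne
  exact ⟨⟨x, hfix x, fun y _ => hall x y⟩,
    Finset.eq_univ_iff_forall.2 fun y => Equiv.Perm.mem_support.2 (hfix y)⟩

lemma count_le_two {g : Perm α} {a b : α}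
    (hcov : ∀ y, g.SameCycle a y ∨ g.SameCycle b y) : orbitCount g ≤ 2 := by
  have hsub : (Set.range fun x => {y | g.SameCycle x y}) ⊆
      {{y | g.SameCycle a y}, {y | g.SameCycle b y}} := by
    rintro _ ⟨x, rfl⟩
    rcases hcov x with h | h
    · exact Or.inl (cls_eq_of_sameCycle h).symm
    · exact Or.inr (cls_eq_of_sameCycle h).symm
  calc orbitCount g ≤ ({{y | g.SameCycle a y}, {y | g.SameCycle b y}} : Set (Set α)).ncard :=
        Set.ncard_le_ncard hsub ((Set.finite_singleton _).insert _)
    _ ≤ 1 + 1 := (Set.ncard_insert_le _ _).trans (by simp)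
    _ = 2 := rfl

lemma count_eq_two {g : Perm α} {a b : α}
    (hcov : ∀ y, g.SameCycle a y ∨ g.SameCycle b y) (hnsc : ¬g.SameCycle a b) :
    orbitCount g = 2 := by
  have hr : (Set.range fun x => {y | g.SameCycle x y}) =
      {{y | g.SameCycle a y}, {y | g.SameCycle b y}} := by
    apply Set.Subset.antisymm
    · rintro _ ⟨x, rfl⟩
      rcases hcov x with h | h
      · exact Or.inl (cls_eq_of_sameCycle h).symm
      · exact Or.inr (cls_eq_of_sameCycle h).symm
    · rintro _ (rfl | rfl)
      exacts [⟨a, rfl⟩, ⟨b, rfl⟩]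
  rw [orbitCount, hr, Set.ncard_pair (fun he => hnsc (sameCycle_of_cls_eq he))]

lemma all_of_count_one {g : Perm α} (h : orbitCount g = 1) : ∀ x y, g.SameCycle x y := by
  obtain ⟨C, hC⟩ := Set.ncard_eq_one.1 h
  intro x y
  have hx : {z | g.SameCycle x z} = C := by
    have : {z | g.SameCycle x z} ∈ Set.range fun x => {y | g.SameCycle x y} := ⟨x, rfl⟩
    rw [hC] at this; exact this
  have hy : {z | g.SameCycle y z} = C := by
    have : {z | g.SameCycle y z} ∈ Set.range fun x => {y | g.SameCycle x y} := ⟨y, rfl⟩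
    rw [hC] at this; exact this
  exact sameCycle_of_cls_eq (hx.trans hy.symm)

lemma all_of_cov_sc {g : Perm α} {a b : α}
    (hcov : ∀ y, g.SameCycle a y ∨ g.SameCycle b y) (hab : g.SameCycle a b) :
    ∀ x y, g.SameCycle x y := by
  intro x y
  have hx : g.SameCycle a x := (hcov x).elim id fun h => hab.trans h
  have hy : g.SameCycle a y := (hcov y).elim id fun h => hab.trans h
  exact hx.symm.trans hy

end Stmt16Aux

open Equiv Equiv.Perm Stmt16Aux

theorem stmt16 {α : Type*} [Fintype α] [DecidableEq α] (d : ℕ) (hd : 2 ≤ d)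
    (hcard : Fintype.card α = d) (g1 g2 : Equiv.Perm α) (hswap : g2.IsSwap)
    (hgen : Subgroup.closure {g1, g2} = (⊤ : Subgroup (Equiv.Perm α))) :
    orbitCount g1 ≤ 2 ∧
    (orbitCount g1 = 2 → (g1 * g2).IsCycle ∧ (g1 * g2).support = Finset.univ) ∧
    (orbitCount g1 = 1 → orbitCount (g2 * g1) = 2) := by
  obtain ⟨a, b, hab, rfl⟩ := hswap
  have hcard2 : 2 ≤ Fintype.card α := hcard ▸ hd
  -- swap invariance of any set containing both a and b or related symmetric sets
  have hswapinv : ∀ (S : Set α), a ∈ S → b ∈ S → ∀ x, Equiv.swap a b x ∈ S ↔ x ∈ S := by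
    intro S ha hb x
    rcases eq_or_ne x a with rfl | hxa
    · rw [Equiv.swap_apply_left]; exact ⟨fun _ => ha, fun _ => hb⟩
    rcases eq_or_ne x b with rfl | hxb
    · rw [Equiv.swap_apply_right]; exact ⟨fun _ => hb, fun _ => ha⟩
    · rw [Equiv.swap_apply_of_ne_of_ne hxa hxb]
  -- Orbits of g1 cover: every point is in the orbit of a or of b
  have hcov1 : ∀ y, g1.SameCycle a y ∨ g1.SameCycle b y := by
    set S : Set α := {y | g1.SameCycle a y ∨ g1.SameCycle b y} with hS
    have h1 : ∀ x, g1 x ∈ S ↔ x ∈ S := fun x =>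
      or_congr sameCycle_apply_right sameCycle_apply_right
    have h2 : ∀ x, Equiv.swap a b x ∈ S ↔ x ∈ S :=
      hswapinv S (Or.inl (SameCycle.refl _ _)) (Or.inr (SameCycle.refl _ _))
    have := cover hgen h1 h2 ⟨a, Or.inl (SameCycle.refl _ _)⟩
    intro y
    have : y ∈ S := this ▸ Set.mem_univ y
    exact this
  refine ⟨count_le_two hcov1, ?_, ?_⟩
  · -- orbitCount g1 = 2 case
    intro h2cnt
    have hnsc : ¬g1.SameCycle a b := by
      intro hsc
      have hall := all_of_cov_sc hcov1 hsc
      have : orbitCount g1 = 1 := by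
        have hr : (Set.range fun x => {y | g1.SameCycle x y}) = {{y | g1.SameCycle a y}} := by
          apply Set.eq_singleton_iff_unique_mem.2
          exact ⟨⟨a, rfl⟩, by rintro _ ⟨x, rfl⟩; exact (cls_eq_of_sameCycle (hall a x)).symm⟩
        rw [orbitCount, hr, Set.ncard_singleton]
      omega
    set h' : Equiv.Perm α := g1 * Equiv.swap a b with hh'
    have hscab' : h'.SameCycle a b := by
      by_contra hn
      have := sameCycle_mul_swap hn
      have he : h' * Equiv.swap a b = g1 := by
        rw [hh', mul_assoc, Equiv.swap_mul_self, mul_one]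
      rw [he] at this
      exact hnsc this
    have hcov' : ∀ y, h'.SameCycle a y ∨ h'.SameCycle b y := by
      set S : Set α := {y | h'.SameCycle a y ∨ h'.SameCycle b y} with hS
      have hinvh : ∀ x, h' x ∈ S ↔ x ∈ S := fun x =>
        or_congr sameCycle_apply_right sameCycle_apply_right
      have h2 : ∀ x, Equiv.swap a b x ∈ S ↔ x ∈ S :=
        hswapinv S (Or.inl (SameCycle.refl _ _)) (Or.inr (SameCycle.refl _ _))
      have h1 : ∀ x, g1 x ∈ S ↔ x ∈ S := by
        intro x
        have : g1 x = h' (Equiv.swap a b x) := by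
          rw [hh']
          simp [Equiv.Perm.mul_apply, Equiv.swap_apply_self]
        rw [this]
        exact (hinvh _).trans (h2 x)
      have := cover hgen h1 h2 ⟨a, Or.inl (SameCycle.refl _ _)⟩
      intro y
      have : y ∈ S := this ▸ Set.mem_univ y
      exact this
    exact isCycle_of_all hcard2 (all_of_cov_sc hcov' hscab')
  · -- orbitCount g1 = 1 case
    intro h1cnt
    have hall1 := all_of_count_one h1cnt
    set h : Equiv.Perm α := Equiv.swap a b * g1 with hh
    have hcovh : ∀ y, h.SameCycle a y ∨ h.SameCycle b y := by
      set S : Set α := {y | h.SameCycle a y ∨ h.SameCycle b y} with hS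
      have hinvh : ∀ x, h x ∈ S ↔ x ∈ S := fun x =>
        or_congr sameCycle_apply_right sameCycle_apply_right
      have h2 : ∀ x, Equiv.swap a b x ∈ S ↔ x ∈ S :=
        hswapinv S (Or.inl (SameCycle.refl _ _)) (Or.inr (SameCycle.refl _ _))
      have h1 : ∀ x, g1 x ∈ S ↔ x ∈ S := by
        intro x
        have : g1 x = Equiv.swap a b (h x) := by
          rw [hh]
          simp [Equiv.Perm.mul_apply, Equiv.swap_apply_self]
        rw [this]
        exact (h2 _).trans (hinvh x)
      have := cover hgen h1 h2 ⟨a, Or.inl (SameCycle.refl _ _)⟩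
      intro y
      have : y ∈ S := this ▸ Set.mem_univ y
      exact this
    have hnsch : ¬h.SameCycle a b := by
      intro hsc
      have hallh := all_of_cov_sc hcovh hsc
      obtain ⟨hc1, hs1⟩ := isCycle_of_all hcard2 hall1
      obtain ⟨hch, hsh⟩ := isCycle_of_all hcard2 hallh
      have hsign1 : Equiv.Perm.sign g1 = -(-1) ^ Fintype.card α := by
        rw [← Finset.card_univ, ← hs1]; exact hc1.sign
      have hsignh : Equiv.Perm.sign h = -(-1) ^ Fintype.card α := by
        rw [← Finset.card_univ, ← hsh]; exact hch.sign
      have hsignh' : Equiv.Perm.sign h = -Equiv.Perm.sign g1 := by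
        rw [hh, map_mul, Equiv.Perm.sign_swap hab, neg_one_mul]
      rw [hsignh', hsign1] at hsignh
      have : (-1 : ℤˣ) ^ Fintype.card α = -(-1) ^ Fintype.card α := by
        rw [neg_neg] at hsignh
        exact (neg_eq_iff_eq_neg.1 hsignh.symm)
      rcases Int.units_eq_one_or ((-1 : ℤˣ) ^ Fintype.card α) with he | he <;>
        rw [he] at this <;> exact absurd this (by decide)
    exact count_eq_two hcovh hnsch
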